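/- Regarded as a ℤ/2ℤ-valued function of the rows a_0,…,a_n ∈ ℤ^n of the matrix A, the function B is multilinear modulo 2: for any index 0 ≤ i ≤ n and any decomposition a_i = a_i' + a_i'' in ℤ^n, one has B(a_0,…,a_i,…,a_n) ≡ B(a_0,…,a_i',…,a_n) + B(a_0,…,a_i'',…,a_n) (mod 2), where on the right-hand side only the i-th row is replaced by a_i' (resp. a_i'') and all other rows are unchanged. -/
import Mathlib


open Matrix

/-- The strictly increasing embedding `Fin m → Fin (m + 2)` that skips the values
of `i` and `j` (for `i < j`): used to delete rows `i` and `j` of a matrix. -/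
def skip2 {m : ℕ} (i j : Fin (m + 2)) (r : Fin m) : Fin (m + 2) :=
  if r.val < i.val then ⟨r.val, by have := r.isLt; omega⟩
  else if r.val + 1 < j.val then ⟨r.val + 1, by have := r.isLt; omega⟩
  else ⟨r.val + 2, by have := r.isLt; omega⟩

/-- `B(A) = Σ_k Σ_{i<j} a_{ik} a_{jk} A^k_{ij}`, where `A^k_{ij}` is the determinant of
the matrix obtained from `A` by deleting rows `i`, `j` and column `k`. -/
def Bcoef {m : ℕ} (A : Matrix (Fin (m + 2)) (Fin (m + 1)) ℤ) : ℤ :=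
  ∑ c : Fin (m + 1), ∑ i : Fin (m + 2), ∑ j : Fin (m + 2),
    if i < j then A i c * A j c * (A.submatrix (skip2 i j) c.succAbove).det else 0

lemma skip2_ne {m : ℕ} {i j : Fin (m + 2)} (h : i < j) (r : Fin m) :
    skip2 i j r ≠ i ∧ skip2 i j r ≠ j := by
  unfold skip2
  rw [Fin.lt_def] at h
  split_ifs with h1 h2 <;>
    constructor <;> intro he <;> rw [Fin.ext_iff] at he <;> simp at he <;> omega

lemma skip2_injective {m : ℕ} (i j : Fin (m + 2)) : Function.Injective (skip2 i j) := by
  intro r s hrs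
  unfold skip2 at hrs
  rw [Fin.ext_iff] at hrs ⊢
  split_ifs at hrs <;> simp_all <;> omega

lemma skip2_surj {m : ℕ} {i j k : Fin (m + 2)} (hij : i < j) (hki : k ≠ i) (hkj : k ≠ j) :
    ∃ r : Fin m, skip2 i j r = k := by
  rw [Fin.lt_def] at hij
  have hki' : k.val ≠ i.val := fun he => hki (Fin.ext he)
  have hkj' : k.val ≠ j.val := fun he => hkj (Fin.ext he)
  have hk := k.isLt
  have hjlt := j.isLt
  by_cases h1 : k.val < i.val
  · refine ⟨⟨k.val, by omega⟩, ?_⟩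
    simp only [skip2]
    rw [if_pos h1]
  · by_cases h2 : k.val < j.val
    · refine ⟨⟨k.val - 1, by omega⟩, ?_⟩
      simp only [skip2]
      rw [if_neg (show ¬(k.val - 1 < i.val) by omega),
        if_pos (show k.val - 1 + 1 < j.val by omega)]
      rw [Fin.ext_iff]; simp; omega
    · refine ⟨⟨k.val - 2, by omega⟩, ?_⟩
      simp only [skip2]
      rw [if_neg (show ¬(k.val - 2 < i.val) by omega),
        if_neg (show ¬(k.val - 2 + 1 < j.val) by omega)]
      rw [Fin.ext_iff]; simp; omega

/-- Regarded as a `ℤ/2ℤ`-valued function of the rows of `A`, `B` is multilinear: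
if the `i`-th row decomposes as `aᵢ = aᵢ' + aᵢ''`, then
`B(a₀,…,aᵢ,…,aₙ) ≡ B(a₀,…,aᵢ',…,aₙ) + B(a₀,…,aᵢ'',…,aₙ) (mod 2)`. -/
theorem Bcoef_multilinear_mod_two {m : ℕ} (A : Matrix (Fin (m + 2)) (Fin (m + 1)) ℤ)
    (i : Fin (m + 2)) (a' a'' : Fin (m + 1) → ℤ) (h : A i = a' + a'') :
    Bcoef A ≡ Bcoef (A.updateRow i a') + Bcoef (A.updateRow i a'') [ZMOD 2] := by
  suffices hE : Bcoef A = Bcoef (A.updateRow i a') + Bcoef (A.updateRow i a'') by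
    rw [hE]
  unfold Bcoef
  rw [← Finset.sum_add_distrib]
  refine Finset.sum_congr rfl fun c _ => ?_
  rw [← Finset.sum_add_distrib]
  refine Finset.sum_congr rfl fun p _ => ?_
  rw [← Finset.sum_add_distrib]
  refine Finset.sum_congr rfl fun q _ => ?_
  by_cases hpq : p < q
  · simp only [if_pos hpq]
    by_cases hpi : p = i
    · subst hpi
      have hqi : q ≠ p := ne_of_gt hpq
      have hsub : ∀ v : Fin (m + 1) → ℤ,
          (A.updateRow p v).submatrix (skip2 p q) c.succAbove
            = A.submatrix (skip2 p q) c.succAbove := by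
        intro v; ext r s
        simp [Matrix.updateRow_ne (skip2_ne hpq r).1]
      rw [hsub, hsub]
      rw [Matrix.updateRow_self, Matrix.updateRow_self,
        Matrix.updateRow_ne hqi, Matrix.updateRow_ne hqi]
      have hA : A p c = a' c + a'' c := by rw [h]; rfl
      rw [hA]; ring
    · by_cases hqi : q = i
      · subst hqi
        have hsub : ∀ v : Fin (m + 1) → ℤ,
            (A.updateRow q v).submatrix (skip2 p q) c.succAbove
              = A.submatrix (skip2 p q) c.succAbove := by
          intro v; ext r s
          simp [Matrix.updateRow_ne (skip2_ne hpq r).2]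
        rw [hsub, hsub]
        rw [Matrix.updateRow_self, Matrix.updateRow_self,
          Matrix.updateRow_ne hpi, Matrix.updateRow_ne hpi]
        have hA : A q c = a' c + a'' c := by rw [h]; rfl
        rw [hA]; ring
      · obtain ⟨r0, hr0⟩ := skip2_surj hpq (Ne.symm hpi) (Ne.symm hqi)
        have key : ∀ v : Fin (m + 1) → ℤ,
            (A.updateRow i v).submatrix (skip2 p q) c.succAbove
              = (A.submatrix (skip2 p q) c.succAbove).updateRow r0
                  (fun s => v (c.succAbove s)) := by
          intro v; ext r s
          by_cases hr : r = r0
          · subst hr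
            simp [Matrix.submatrix_apply, hr0, Matrix.updateRow_self]
          · have hne : skip2 p q r ≠ i := fun he =>
              hr (skip2_injective p q (he.trans hr0.symm))
            simp [Matrix.submatrix_apply, Matrix.updateRow_ne hne,
              Matrix.updateRow_ne hr]
        have hrow : (A.submatrix (skip2 p q) c.succAbove) r0
            = fun s => (a' + a'') (c.succAbove s) := by
          funext s
          simp only [Matrix.submatrix_apply, hr0, h]
        have base : A.submatrix (skip2 p q) c.succAbove
            = (A.submatrix (skip2 p q) c.succAbove).updateRow r0
                (fun s => (a' + a'') (c.succAbove s)) := by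
          rw [← hrow, Matrix.updateRow_eq_self]
        have hdet : (A.submatrix (skip2 p q) c.succAbove).det
            = ((A.submatrix (skip2 p q) c.succAbove).updateRow r0
                (fun s => a' (c.succAbove s))).det
              + ((A.submatrix (skip2 p q) c.succAbove).updateRow r0
                (fun s => a'' (c.succAbove s))).det := by
          conv_lhs => rw [base]
          rw [show (fun s => (a' + a'') (c.succAbove s))
              = (fun s => a' (c.succAbove s)) + (fun s => a'' (c.succAbove s)) from rfl,
            Matrix.det_updateRow_add]
        rw [Matrix.updateRow_ne hpi, Matrix.updateRow_ne hpi,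
          Matrix.updateRow_ne hqi, Matrix.updateRow_ne hqi,
          key a', key a'', hdet]
        ring
  · simp [if_neg hpq]
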